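/- Let q*, a, σ_b > 0 satisfy q* ≥ q*·erf(a/√(2q*)) − √(2/π)·a·√(q*)·exp(−a²/(2q*)) + σ_b². Then a/√(q*) < (8/π)^{1/6} · (a²/σ_b²)^{1/3}. -/

import Mathlib

open MeasureTheory Set

noncomputable def erf (x : ℝ) : ℝ :=
  (2 / Real.sqrt Real.pi) * ∫ t in (0:ℝ)..x, Real.exp (-t ^ 2)

lemma gauss_int : Integrable (fun t : ℝ => Real.exp (-t ^ 2)) := by
  simpa using integrable_exp_neg_mul_sq (one_pos)

lemma hasDerivAt_g (t : ℝ) :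
    HasDerivAt (fun t : ℝ => -(Real.exp (-t ^ 2)) / 2) (t * Real.exp (-t ^ 2)) t := by
  have h1 : HasDerivAt (fun t : ℝ => -t ^ 2) (-(2 * t)) t := by
    simpa using ((hasDerivAt_pow 2 t).fun_neg)
  have h2 := (h1.exp).fun_neg.div_const 2
  refine h2.congr_deriv ?_
  ring

lemma tail_moment (u : ℝ) (hu : 0 < u) :
    IntegrableOn (fun t : ℝ => t * Real.exp (-t ^ 2)) (Ioi u) ∧
    ∫ t in Ioi u, t * Real.exp (-t ^ 2) = Real.exp (-u ^ 2) / 2 := by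
  have hderiv : ∀ t ∈ Ici u, HasDerivAt (fun t : ℝ => -(Real.exp (-t ^ 2)) / 2)
      (t * Real.exp (-t ^ 2)) t := fun t _ => hasDerivAt_g t
  have hnn : ∀ t ∈ Ioi u, 0 ≤ t * Real.exp (-t ^ 2) := fun t ht =>
    mul_nonneg (le_of_lt (hu.trans ht)) (Real.exp_pos _).le
  have htend : Filter.Tendsto (fun t : ℝ => -(Real.exp (-t ^ 2)) / 2) Filter.atTop (nhds 0) := by
    have h1 : Filter.Tendsto (fun t : ℝ => -t ^ 2) Filter.atTop Filter.atBot := by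
      simpa using (tendsto_pow_atTop (n := 2) (by norm_num)).neg
    have := (Real.tendsto_exp_atBot.comp h1).neg.div_const 2
    simpa using this
  refine ⟨integrableOn_Ioi_deriv_of_nonneg' hderiv hnn htend, ?_⟩
  have := integral_Ioi_of_hasDerivAt_of_nonneg' hderiv hnn htend
  rw [this]; ring

lemma erfc_bound (u : ℝ) (hu : 0 < u) :
    1 - erf u ≤ 1 / (Real.sqrt Real.pi * u) := by
  have hπ : 0 < Real.sqrt Real.pi := Real.sqrt_pos.2 Real.pi_pos
  have hsplit : (∫ t in Ioi (0:ℝ), Real.exp (-t ^ 2)) =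
      (∫ t in Ioc (0:ℝ) u, Real.exp (-t ^ 2)) + ∫ t in Ioi u, Real.exp (-t ^ 2) := by
    rw [← setIntegral_union (by simp [Set.disjoint_left]) measurableSet_Ioi
      gauss_int.integrableOn gauss_int.integrableOn, Set.Ioc_union_Ioi_eq_Ioi hu.le]
  have hIoi0 : (∫ t in Ioi (0:ℝ), Real.exp (-t ^ 2)) = Real.sqrt Real.pi / 2 := by
    simpa using integral_gaussian_Ioi 1
  have herf : erf u = (2 / Real.sqrt Real.pi) * ∫ t in Ioc (0:ℝ) u, Real.exp (-t ^ 2) := by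
    rw [erf, intervalIntegral.integral_of_le hu.le]
  have hJ : (∫ t in Ioi u, Real.exp (-t ^ 2)) ≤ 1 / (2 * u) := by
    obtain ⟨hint, hval⟩ := tail_moment u hu
    have hmono : (∫ t in Ioi u, Real.exp (-t ^ 2)) ≤
        ∫ t in Ioi u, (t / u) * Real.exp (-t ^ 2) := by
      refine setIntegral_mono_on gauss_int.integrableOn ?_ measurableSet_Ioi ?_
      · have : (fun t : ℝ => (t / u) * Real.exp (-t ^ 2)) =
            fun t : ℝ => (1 / u) * (t * Real.exp (-t ^ 2)) := by
          funext t; ring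
        rw [this]; exact hint.const_mul _
      · intro t ht
        have h1 : (1 : ℝ) ≤ t / u := (one_le_div hu).2 (le_of_lt ht)
        nlinarith [Real.exp_pos (-t ^ 2)]
    have heq : (∫ t in Ioi u, (t / u) * Real.exp (-t ^ 2)) =
        (1 / u) * (Real.exp (-u ^ 2) / 2) := by
      rw [← hval, ← integral_const_mul]
      congr 1; funext t; ring
    have hexp : Real.exp (-u ^ 2) ≤ 1 := Real.exp_le_one_iff.2 (neg_nonpos.mpr (sq_nonneg u))
    calc (∫ t in Ioi u, Real.exp (-t ^ 2)) ≤ (1 / u) * (Real.exp (-u ^ 2) / 2) :=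
          hmono.trans heq.le
      _ ≤ 1 / (2 * u) := by rw [div_mul_eq_mul_div, one_mul, div_le_div_iff₀ (by positivity) (by positivity)]; nlinarith
  have key : 1 - erf u = (2 / Real.sqrt Real.pi) * ∫ t in Ioi u, Real.exp (-t ^ 2) := by
    rw [herf]
    have : (∫ t in Ioc (0:ℝ) u, Real.exp (-t ^ 2)) =
        Real.sqrt Real.pi / 2 - ∫ t in Ioi u, Real.exp (-t ^ 2) := by
      rw [← hIoi0, hsplit]; ring
    rw [this]; field_simp; ring
  rw [key]
  refine le_trans (mul_le_mul_of_nonneg_left hJ (by positivity)) (le_of_eq ?_)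
  field_simp

lemma exp_neg_lt (y : ℝ) (hy : 0 < y) : Real.exp (-y) < 1 / (2 * y) := by
  have h1 : y / 2 + 1 < Real.exp (y / 2) := Real.add_one_lt_exp (by positivity)
  have h2 : Real.exp y = Real.exp (y / 2) * Real.exp (y / 2) := by
    rw [← Real.exp_add]; ring_nf
  have h1' : (y / 2 + 1) * (y / 2 + 1) < Real.exp (y / 2) * Real.exp (y / 2) := by
    nlinarith [Real.exp_pos (y / 2)]
  have h3 : 2 * y < Real.exp y := by nlinarith [sq_nonneg (y / 2 - 1)]
  rw [Real.exp_neg, inv_eq_one_div, div_lt_div_iff₀ (Real.exp_pos y) (by positivity)]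
  nlinarith

theorem ratio_upper_bound (qs a σb : ℝ)
    (hq : 0 < qs) (ha : 0 < a) (hσb : 0 < σb)
    (hineq : qs ≥ qs * erf (a / Real.sqrt (2 * qs)) -
        Real.sqrt (2 / Real.pi) * a * Real.sqrt qs * Real.exp (-a ^ 2 / (2 * qs)) +
        σb ^ 2) :
    a / Real.sqrt qs < (8 / Real.pi) ^ ((1:ℝ)/6) * (a ^ 2 / σb ^ 2) ^ ((1:ℝ)/3) := by
  have hπ : 0 < Real.pi := Real.pi_pos
  have hsπ : 0 < Real.sqrt Real.pi := Real.sqrt_pos.2 hπ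
  set s := Real.sqrt qs with hs_def
  have hs : 0 < s := Real.sqrt_pos.2 hq
  have hs2 : s ^ 2 = qs := Real.sq_sqrt hq.le
  set u := a / Real.sqrt (2 * qs) with hu_def
  have h2qs : Real.sqrt (2 * qs) = Real.sqrt 2 * s := Real.sqrt_mul (by norm_num) qs
  have hsqrt2 : 0 < Real.sqrt 2 := Real.sqrt_pos.2 (by norm_num)
  have hu : 0 < u := div_pos ha (Real.sqrt_pos.2 (by positivity))
  -- bound on erfc term
  have h1 : qs * (1 - erf u) ≤ qs * (1 / (Real.sqrt Real.pi * u)) :=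
    mul_le_mul_of_nonneg_left (erfc_bound u hu) hq.le
  -- simplify: 1/(√π u) = √2 * s / (√π * a)
  have hu_eq : 1 / (Real.sqrt Real.pi * u) = Real.sqrt 2 * s / (Real.sqrt Real.pi * a) := by
    rw [hu_def, h2qs]; field_simp
  -- bound on exp term
  have hy : 0 < a ^ 2 / (2 * qs) := by positivity
  have hexp : Real.exp (-a ^ 2 / (2 * qs)) < 1 / (2 * (a ^ 2 / (2 * qs))) := by
    rw [neg_div]; exact exp_neg_lt _ hy
  have hexp' : Real.exp (-a ^ 2 / (2 * qs)) < qs / a ^ 2 := by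
    have : 1 / (2 * (a ^ 2 / (2 * qs))) = qs / a ^ 2 := by field_simp
    rwa [this] at hexp
  have hs2π : Real.sqrt (2 / Real.pi) = Real.sqrt 2 / Real.sqrt Real.pi :=
    Real.sqrt_div' 2 hπ.le ▸ by rw [Real.sqrt_div (by norm_num : (0:ℝ) ≤ 2)]
  have hcoef : 0 < Real.sqrt (2 / Real.pi) := Real.sqrt_pos.2 (by positivity)
  -- combine
  have hmain : σb ^ 2 < 2 * (Real.sqrt 2 / Real.sqrt Real.pi) * s ^ 3 / a := by
    have hA : qs * (1 - erf u) ≤ (Real.sqrt 2 / Real.sqrt Real.pi) * s ^ 3 / a := by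
      calc qs * (1 - erf u) ≤ qs * (Real.sqrt 2 * s / (Real.sqrt Real.pi * a)) := by
            rw [← hu_eq]; exact h1
        _ = (Real.sqrt 2 / Real.sqrt Real.pi) * s ^ 3 / a := by
            rw [← hs2]; field_simp
    have hB : Real.sqrt (2 / Real.pi) * a * s * Real.exp (-a ^ 2 / (2 * qs)) <
        (Real.sqrt 2 / Real.sqrt Real.pi) * s ^ 3 / a := by
      calc Real.sqrt (2 / Real.pi) * a * s * Real.exp (-a ^ 2 / (2 * qs)) <
            Real.sqrt (2 / Real.pi) * a * s * (qs / a ^ 2) := by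
            apply mul_lt_mul_of_pos_left hexp' (by positivity)
        _ = (Real.sqrt 2 / Real.sqrt Real.pi) * s ^ 3 / a := by
            rw [hs2π, ← hs2]; field_simp
    have hσ : σb ^ 2 ≤ qs * (1 - erf u) + Real.sqrt (2 / Real.pi) * a * s * Real.exp (-a ^ 2 / (2 * qs)) := by
      nlinarith [hineq]
    have hr : 2 * (Real.sqrt 2 / Real.sqrt Real.pi) * s ^ 3 / a =
        (Real.sqrt 2 / Real.sqrt Real.pi) * s ^ 3 / a +
        (Real.sqrt 2 / Real.sqrt Real.pi) * s ^ 3 / a := by ring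
    linarith
  -- cube root step
  have hx3 : (a / s) ^ 3 < (8 / Real.pi) ^ ((1:ℝ)/2) * (a ^ 2 / σb ^ 2) := by
    have h8 : ((8 : ℝ) / Real.pi) ^ ((1:ℝ)/2) = 2 * (Real.sqrt 2 / Real.sqrt Real.pi) := by
      rw [← Real.sqrt_eq_rpow, Real.sqrt_div (by norm_num : (0:ℝ) ≤ 8)]
      have : Real.sqrt 8 = 2 * Real.sqrt 2 := by
        rw [show (8:ℝ) = 2 ^ 2 * 2 by norm_num, Real.sqrt_mul (by positivity),
          Real.sqrt_sq (by norm_num : (0:ℝ) ≤ 2)]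
      rw [this]; ring
    rw [h8, div_pow]
    have hm2 : σb ^ 2 * a < 2 * (Real.sqrt 2 / Real.sqrt Real.pi) * s ^ 3 :=
      (lt_div_iff₀ ha).1 hmain
    have key : a ^ 3 * σb ^ 2 < 2 * (Real.sqrt 2 / Real.sqrt Real.pi) * a ^ 2 * s ^ 3 := by
      nlinarith [mul_lt_mul_of_pos_left hm2 (pow_pos ha 2)]
    have hre : 2 * (Real.sqrt 2 / Real.sqrt Real.pi) * (a ^ 2 / σb ^ 2) =
        (2 * (Real.sqrt 2 / Real.sqrt Real.pi) * a ^ 2) / σb ^ 2 := by ring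
    rw [hre, div_lt_div_iff₀ (pow_pos hs 3) (pow_pos hσb 2)]
    nlinarith [key]
  have hRpos : 0 < (8 / Real.pi) ^ ((1:ℝ)/6) * (a ^ 2 / σb ^ 2) ^ ((1:ℝ)/3) := by
    apply mul_pos <;> exact Real.rpow_pos_of_pos (by positivity) _
  by_contra hcon
  push_neg at hcon
  have hcube : ((8 / Real.pi) ^ ((1:ℝ)/6) * (a ^ 2 / σb ^ 2) ^ ((1:ℝ)/3)) ^ 3 =
      (8 / Real.pi) ^ ((1:ℝ)/2) * (a ^ 2 / σb ^ 2) := by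
    rw [mul_pow, ← Real.rpow_natCast ((8 / Real.pi) ^ ((1:ℝ)/6)) 3,
      ← Real.rpow_natCast ((a ^ 2 / σb ^ 2) ^ ((1:ℝ)/3)) 3,
      ← Real.rpow_mul (by positivity), ← Real.rpow_mul (by positivity)]
    norm_num
  have := pow_le_pow_left₀ hRpos.le hcon 3
  rw [hcube] at this
  exact absurd (lt_of_le_of_lt this hx3) (lt_irrefl _)
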